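/- Let I be an interval, σ a weight, w a weight, J an interval with 3I ∩ 3J = ∅ and |J| ≤ |I|, and let h be a function supported on J with ∫ h dw = 0 and ‖h‖_{L²(w)} = 1 (a unit mean-zero function). Then |⟨H(σ𝟙_I), h⟩_w| ≤ C σ(I) · w(J)^{1/2} |J| (|J| + dist(I,J))^{-2}, where H(σ𝟙_I)(x) = ∫_I (x−y)^{-1} dσ(y) and C is an absolute constant. -/

import Mathlib

open MeasureTheory Set

/-- The Hilbert transform of `σ` restricted to `I = [aI,bI]`:
`H(σ𝟙_I)(x) = ∫_I (x−y)⁻¹ dσ(y)`. -/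
noncomputable def HtrOn (σ : Measure ℝ) (aI bI : ℝ) (x : ℝ) : ℝ :=
  ∫ y in Icc aI bI, (x - y)⁻¹ ∂σ

/-- Kernel difference estimate. -/
lemma kernel_bound {aI bI aJ bJ x y : ℝ} (hI : aI < bI) (hJ : aJ < bJ)
    (hLJ : bJ - aJ ≤ bI - aI)
    (hsep : bI + (bI - aI) < aJ - (bJ - aJ) ∨ bJ + (bJ - aJ) < aI - (bI - aI))
    (hx : x ∈ Icc aJ bJ) (hy : y ∈ Icc aI bI) :
    |(x - y)⁻¹ - ((aJ + bJ) / 2 - y)⁻¹| ≤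
      2 * ((bJ - aJ) * (((bJ - aJ) + max (aJ - bI) (aI - bJ)) ^ 2)⁻¹) := by
  obtain ⟨hx1, hx2⟩ := hx
  obtain ⟨hy1, hy2⟩ := hy
  set L : ℝ := bJ - aJ with hL
  set d : ℝ := max (aJ - bI) (aI - bJ) with hd
  set c : ℝ := (aJ + bJ) / 2 with hc
  have hLpos : 0 < L := by simp only [hL]; linarith
  obtain ⟨hdL, hdpos, hprod⟩ : 2 * L ≤ d ∧ 0 < d ∧ d * d ≤ (x - y) * (c - y) := by
    rcases hsep with hs | hs
    · have hd' : d = aJ - bI := max_eq_left (by simp only [hL] at hLpos ⊢; linarith)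
      have h1 : d ≤ x - y := by rw [hd']; linarith
      have h2 : d ≤ c - y := by rw [hd', hc]; linarith
      have hdpos : 0 < d := by rw [hd']; simp only [hL] at hLpos hs; linarith
      exact ⟨by rw [hd']; simp only [hL] at hs ⊢; linarith, hdpos,
        mul_le_mul h1 h2 hdpos.le (by linarith)⟩
    · have hd' : d = aI - bJ := max_eq_right (by simp only [hL] at hLpos ⊢; linarith)
      have h1 : d ≤ y - x := by rw [hd']; linarith
      have h2 : d ≤ y - c := by rw [hd', hc]; linarith
      have hdpos : 0 < d := by rw [hd']; simp only [hL] at hLpos hs; linarith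
      refine ⟨by rw [hd']; simp only [hL] at hs ⊢; linarith, hdpos, ?_⟩
      calc d * d ≤ (y - x) * (y - c) := mul_le_mul h1 h2 hdpos.le (by linarith)
        _ = (x - y) * (c - y) := by ring
  have hprodpos : 0 < (x - y) * (c - y) := lt_of_lt_of_le (mul_pos hdpos hdpos) hprod
  have hxy0 : x - y ≠ 0 := by
    intro h0; rw [h0, zero_mul] at hprodpos; exact lt_irrefl _ hprodpos
  have hcy0 : c - y ≠ 0 := by
    intro h0; rw [h0, mul_zero] at hprodpos; exact lt_irrefl _ hprodpos
  have key : (x - y)⁻¹ - (c - y)⁻¹ = (c - x) / ((x - y) * (c - y)) := by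
    field_simp
    ring
  have hcx : |c - x| ≤ L / 2 := by
    rw [abs_le]
    constructor <;> simp only [hc, hL] <;> linarith
  rw [key, abs_div, abs_of_pos hprodpos]
  have step1 : |c - x| / ((x - y) * (c - y)) ≤ (L / 2) / (d * d) :=
    div_le_div₀ (by positivity) hcx (mul_pos hdpos hdpos) hprod
  refine le_trans step1 ?_
  have hsum : 0 < (L + d) ^ 2 := by positivity
  rw [show 2 * (L * ((L + d) ^ 2)⁻¹) = (2 * L) / ((L + d) ^ 2) by ring,
    div_le_div_iff₀ (mul_pos hdpos hdpos) hsum]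
  clear_value L d c
  clear hL hd hc key step1 hcx hxy0 hcy0 hprodpos hprod hsep
  nlinarith [mul_nonneg (mul_nonneg hLpos.le hdpos.le) (by linarith : (0:ℝ) ≤ d - 2 * L),
    mul_nonneg (mul_nonneg hLpos.le hLpos.le) (by linarith : (0:ℝ) ≤ d - 2 * L),
    mul_pos (mul_pos hLpos hLpos) hLpos]

/-- Tail estimate: for `3I ∩ 3J = ∅`, `|J| ≤ |I|`, and a unit mean-zero function `h`
supported on `J`, one has `|⟨H(σ𝟙_I), h⟩_w| ≤ C σ(I) w(J)^{1/2} |J| (|J|+dist(I,J))⁻²`. -/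
theorem stmt15 : ∃ C : ℝ, 0 < C ∧
    ∀ (σ w : Measure ℝ) (aI bI aJ bJ : ℝ) (h : ℝ → ℝ),
      aI < bI → aJ < bJ → bJ - aJ ≤ bI - aI →
      Disjoint (Icc (aI - (bI - aI)) (bI + (bI - aI)))
        (Icc (aJ - (bJ - aJ)) (bJ + (bJ - aJ))) →
      σ (Icc aI bI) ≠ ⊤ → w (Icc aJ bJ) ≠ ⊤ →
      Measurable h → (∀ x, x ∉ Icc aJ bJ → h x = 0) →
      MemLp h 2 w → (∫ x, h x ∂w) = 0 → (∫ x, (h x) ^ 2 ∂w) = 1 →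
      |∫ x, HtrOn σ aI bI x * h x ∂w|
        ≤ C * (σ (Icc aI bI)).toReal * Real.sqrt (w (Icc aJ bJ)).toReal *
            ((bJ - aJ) * (((bJ - aJ) + max (aJ - bI) (aI - bJ)) ^ 2)⁻¹) := by
  refine ⟨2, by norm_num, ?_⟩
  intro σ w aI bI aJ bJ h hI hJ hLJ hdisj hσ hw hmeas hsupp hmem hmean hnorm
  -- extract separation
  have hsep : bI + (bI - aI) < aJ - (bJ - aJ) ∨ bJ + (bJ - aJ) < aI - (bI - aI) := by
    by_contra hcon
    push_neg at hcon
    obtain ⟨h1, h2⟩ := hcon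
    set z : ℝ := max (aI - (bI - aI)) (aJ - (bJ - aJ)) with hz
    have hz1 : z ∈ Icc (aI - (bI - aI)) (bI + (bI - aI)) :=
      ⟨le_max_left _ _, max_le (by linarith) h1⟩
    have hz2 : z ∈ Icc (aJ - (bJ - aJ)) (bJ + (bJ - aJ)) :=
      ⟨le_max_right _ _, max_le h2 (by linarith)⟩
    exact (Set.disjoint_left.1 hdisj hz1) hz2
  set L : ℝ := bJ - aJ with hLdef
  set d : ℝ := max (aJ - bI) (aI - bJ) with hddef
  set c : ℝ := (aJ + bJ) / 2 with hcdef
  have hLpos : 0 < L := by simp only [hLdef]; linarith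
  have hd0 : 0 < d := by
    rcases hsep with hs | hs
    · exact lt_max_of_lt_left (by linarith)
    · exact lt_max_of_lt_right (by linarith)
  have hcJ : c ∈ Icc aJ bJ := ⟨by simp only [hcdef]; linarith, by simp only [hcdef]; linarith⟩
  have hImeas : MeasurableSet (Icc aI bI) := measurableSet_Icc
  have hJmeas : MeasurableSet (Icc aJ bJ) := measurableSet_Icc
  haveI hfinσ : IsFiniteMeasure (σ.restrict (Icc aI bI)) :=
    ⟨by rwa [Measure.restrict_apply_univ, lt_top_iff_ne_top]⟩
  haveI hfinw : IsFiniteMeasure (w.restrict (Icc aJ bJ)) :=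
    ⟨by rwa [Measure.restrict_apply_univ, lt_top_iff_ne_top]⟩
  -- distance from J to I
  have habs : ∀ x ∈ Icc aJ bJ, ∀ y ∈ Icc aI bI, d ≤ |x - y| := by
    intro x hx y hy
    rcases hsep with hs | hs
    · have hd' : d = aJ - bI := max_eq_left (by simp only [hLdef] at hLpos; linarith)
      refine le_trans ?_ (le_abs_self _)
      rw [hd']; linarith [hx.1, hy.2]
    · have hd' : d = aI - bJ := max_eq_right (by simp only [hLdef] at hLpos; linarith)
      refine le_trans ?_ (neg_le_abs _)
      rw [hd']; linarith [hx.2, hy.1]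
  -- the kernel is integrable on I for x ∈ J, and H is bounded on J
  have hkint : ∀ x ∈ Icc aJ bJ, Integrable (fun y => (x - y)⁻¹) (σ.restrict (Icc aI bI)) := by
    intro x hx
    refine (integrable_const d⁻¹).mono'
      (((measurable_const.sub measurable_id).inv).aestronglyMeasurable) ?_
    filter_upwards [ae_restrict_mem hImeas] with y hy
    rw [Real.norm_eq_abs, abs_inv]
    exact inv_anti₀ hd0 (habs x hx y hy)
  have hHbound : ∀ x ∈ Icc aJ bJ, |HtrOn σ aI bI x| ≤ d⁻¹ * (σ (Icc aI bI)).toReal := by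
    intro x hx
    rw [← Real.norm_eq_abs]
    have := norm_integral_le_of_norm_le_const (μ := σ.restrict (Icc aI bI))
      (f := fun y => (x - y)⁻¹) (C := d⁻¹) ?_
    · rwa [measureReal_restrict_apply_univ, measureReal_def] at this
    · filter_upwards [ae_restrict_mem hImeas] with y hy
      rw [Real.norm_eq_abs, abs_inv]
      exact inv_anti₀ hd0 (habs x hx y hy)
  -- difference bound
  set K : ℝ := 2 * (L * ((L + d) ^ 2)⁻¹) with hKdef
  have hKpos : 0 ≤ K := by
    have : (0:ℝ) < (L + d) ^ 2 := by positivity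
    positivity
  have hHdiff : ∀ x ∈ Icc aJ bJ,
      |HtrOn σ aI bI x - HtrOn σ aI bI c| ≤ K * (σ (Icc aI bI)).toReal := by
    intro x hx
    have hsub : HtrOn σ aI bI x - HtrOn σ aI bI c
        = ∫ y in Icc aI bI, ((x - y)⁻¹ - (c - y)⁻¹) ∂σ :=
      (integral_sub (hkint x hx) (hkint c hcJ)).symm
    rw [hsub, ← Real.norm_eq_abs]
    have := norm_integral_le_of_norm_le_const (μ := σ.restrict (Icc aI bI))
      (f := fun y => (x - y)⁻¹ - (c - y)⁻¹) (C := K) ?_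
    · rwa [measureReal_restrict_apply_univ, measureReal_def] at this
    · filter_upwards [ae_restrict_mem hImeas] with y hy
      rw [Real.norm_eq_abs]
      exact kernel_bound hI hJ hLJ hsep hx hy
  -- h is integrable
  have hind : (Icc aJ bJ).indicator h = h := by
    funext x
    by_cases hx : x ∈ Icc aJ bJ
    · rw [Set.indicator_of_mem hx]
    · rw [Set.indicator_of_notMem hx, hsupp x hx]
  have hhint : Integrable h w := by
    rw [← hind, integrable_indicator_iff hJmeas]
    exact (hmem.restrict _).integrable (by norm_num)
  -- measurability of H
  have hg : StronglyMeasurable (fun x => HtrOn σ aI bI x) := by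
    have hker : StronglyMeasurable (fun p : ℝ × ℝ => (p.1 - p.2)⁻¹) :=
      ((measurable_fst.sub measurable_snd).inv).stronglyMeasurable
    exact hker.integral_prod_right'
  -- integrability of H * h
  have hdom : ∀ x, ‖HtrOn σ aI bI x * h x‖ ≤ (d⁻¹ * (σ (Icc aI bI)).toReal) * |h x| := by
    intro x
    by_cases hx : x ∈ Icc aJ bJ
    · rw [Real.norm_eq_abs, abs_mul]
      exact mul_le_mul_of_nonneg_right (hHbound x hx) (abs_nonneg _)
    · simp [hsupp x hx]
  have hint1 : Integrable (fun x => HtrOn σ aI bI x * h x) w :=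
    ((hhint.abs.const_mul _).mono'
      ((hg.mul hmeas.stronglyMeasurable).aestronglyMeasurable) (ae_of_all _ hdom))
  -- replace H by its difference with H(c)
  have heq : ∫ x, HtrOn σ aI bI x * h x ∂w
      = ∫ x, (HtrOn σ aI bI x - HtrOn σ aI bI c) * h x ∂w := by
    have : ∫ x, (HtrOn σ aI bI x - HtrOn σ aI bI c) * h x ∂w
        = ∫ x, HtrOn σ aI bI x * h x ∂w - HtrOn σ aI bI c * ∫ x, h x ∂w := by
      simp_rw [sub_mul]
      rw [integral_sub hint1 (hhint.const_mul _), integral_const_mul]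
    rw [this, hmean, mul_zero, sub_zero]
  -- Cauchy–Schwarz
  have hCS : ∫ x, |h x| ∂w ≤ Real.sqrt (w (Icc aJ bJ)).toReal := by
    have hindabs : (Icc aJ bJ).indicator (fun x => |h x|) = fun x => |h x| := by
      funext x
      by_cases hx : x ∈ Icc aJ bJ
      · rw [Set.indicator_of_mem hx]
      · rw [Set.indicator_of_notMem hx, hsupp x hx, abs_zero]
    have hrw : ∫ x, |h x| ∂w = ∫ x in Icc aJ bJ, ‖h x‖ * ‖(1:ℝ)‖ ∂w := by
      rw [← integral_indicator hJmeas]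
      simp_rw [norm_one, mul_one, Real.norm_eq_abs]
      rw [hindabs]
    have hpq : Real.HolderConjugate 2 2 := Real.holderConjugate_iff.mpr ⟨one_lt_two, by norm_num⟩
    have h2 : ENNReal.ofReal (2:ℝ) = 2 := by
      rw [ENNReal.ofReal_ofNat]
    have hmemJ : MemLp h (ENNReal.ofReal (2:ℝ)) (w.restrict (Icc aJ bJ)) := by
      rw [h2]; exact hmem.restrict _
    have hmem1 : MemLp (fun _ : ℝ => (1:ℝ)) (ENNReal.ofReal (2:ℝ))
        (w.restrict (Icc aJ bJ)) := memLp_const 1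
    have hCS0 := integral_mul_norm_le_Lp_mul_Lq (μ := w.restrict (Icc aJ bJ)) hpq hmemJ hmem1
    rw [hrw]
    refine le_trans hCS0 ?_
    have hsq : ∀ a : ℝ, ‖h a‖ ^ (2:ℝ) = (h a) ^ 2 := by
      intro a
      rw [show (2:ℝ) = ((2:ℕ):ℝ) by norm_num, Real.rpow_natCast, Real.norm_eq_abs, sq_abs]
    have hsqind : (Icc aJ bJ).indicator (fun x => (h x) ^ 2) = fun x => (h x) ^ 2 := by
      funext x
      by_cases hx : x ∈ Icc aJ bJ
      · rw [Set.indicator_of_mem hx]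
      · rw [Set.indicator_of_notMem hx, hsupp x hx]; ring
    have e1 : ∫ a in Icc aJ bJ, ‖h a‖ ^ (2:ℝ) ∂w = 1 := by
      simp_rw [hsq]
      rw [← integral_indicator hJmeas, hsqind, hnorm]
    have e2 : ∫ _ in Icc aJ bJ, ‖(1:ℝ)‖ ^ (2:ℝ) ∂w = (w (Icc aJ bJ)).toReal := by
      simp [Real.one_rpow, measureReal_def]
    rw [e1, e2, Real.one_rpow, one_mul, ← Real.sqrt_eq_rpow]
  -- final estimate
  have hbound : ∀ x, ‖(HtrOn σ aI bI x - HtrOn σ aI bI c) * h x‖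
      ≤ (K * (σ (Icc aI bI)).toReal) * |h x| := by
    intro x
    by_cases hx : x ∈ Icc aJ bJ
    · rw [Real.norm_eq_abs, abs_mul]
      exact mul_le_mul_of_nonneg_right (hHdiff x hx) (abs_nonneg _)
    · simp [hsupp x hx]
  have hfinal : |∫ x, (HtrOn σ aI bI x - HtrOn σ aI bI c) * h x ∂w|
      ≤ (K * (σ (Icc aI bI)).toReal) * ∫ x, |h x| ∂w := by
    rw [← Real.norm_eq_abs, ← integral_const_mul]
    exact norm_integral_le_of_norm_le ((hhint.abs).const_mul _) (ae_of_all _ hbound)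
  have hKσ : 0 ≤ K * (σ (Icc aI bI)).toReal := mul_nonneg hKpos ENNReal.toReal_nonneg
  calc |∫ x, HtrOn σ aI bI x * h x ∂w|
      = |∫ x, (HtrOn σ aI bI x - HtrOn σ aI bI c) * h x ∂w| := by rw [heq]
    _ ≤ (K * (σ (Icc aI bI)).toReal) * ∫ x, |h x| ∂w := hfinal
    _ ≤ (K * (σ (Icc aI bI)).toReal) * Real.sqrt (w (Icc aJ bJ)).toReal :=
        mul_le_mul_of_nonneg_left hCS hKσ
    _ = 2 * (σ (Icc aI bI)).toReal * Real.sqrt (w (Icc aJ bJ)).toReal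
        * (L * ((L + d) ^ 2)⁻¹) := by rw [hKdef]; ring
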